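/- Let f = (f_1,…,f_n) be polynomials in R[x] with each deg f_i ≥ 1, δ_f = Σ_{i=1}^n (deg f_i − 1), and let δ ≥ 0 be an integer. Let L and L' be R-linear functionals on R[x] that both annul (f)^{≤δ_f+δ}_x and that agree on all polynomials of total degree ≤ δ_f + δ. Let F ∈ R[x] with deg F ≤ d, fix monotonous difference derivatives ∇f_i of the f_i and a monotonous difference derivative ∇F of F. Then the polynomials H(x) = L(y_*).det‖∇f ∇F; f(x) F(x)‖ and H'(x) = L'(y_*).det‖∇f ∇F; f(x) F(x)‖ satisfy H'(x) − H(x) ∈ (f)^{≤d−δ−1}_x. -/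

import Mathlib

open MvPolynomial Finset

noncomputable section

variable {R : Type*} [CommRing R] {n : ℕ}

/-- Total degree of a multivariate polynomial, valued in `WithBot ℤ`,
with the convention `deg 0 = ⊥` (i.e. `-∞`). -/
def mdeg {σ S : Type*} [CommSemiring S] (F : MvPolynomial σ S) : WithBot ℤ :=
  F.support.sup fun m => ((m.sum fun _ e => e : ℕ) : ℤ)

/-- The embedding `R[x] → R[x,y]`, `x_i ↦ x_i` (the x-variables are `Sum.inl`,
the y-variables are `Sum.inr`). -/
def toX : MvPolynomial (Fin n) R →ₐ[R] MvPolynomial (Fin n ⊕ Fin n) R :=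
  rename Sum.inl

/-- The embedding `R[x] → R[x,y]`, `x_i ↦ y_i`. -/
def toY : MvPolynomial (Fin n) R →ₐ[R] MvPolynomial (Fin n ⊕ Fin n) R :=
  rename Sum.inr

/-- `D = (∇¹F, …, ∇ⁿF)` is a difference derivative of `F`:
`∑ k, (x_k - y_k) * ∇ᵏF(x,y) = F(x) - F(y)`. -/
def IsDiffDeriv (F : MvPolynomial (Fin n) R)
    (D : Fin n → MvPolynomial (Fin n ⊕ Fin n) R) : Prop :=
  ∑ k : Fin n, (X (Sum.inl k) - X (Sum.inr k)) * D k = toX F - toY F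

/-- A difference derivative of `F` is monotonous if each component has total degree
`≤ deg F - 1` (equivalently `deg (∇ᵏF) + 1 ≤ deg F` in `WithBot ℤ`). -/
def IsMonotonous (F : MvPolynomial (Fin n) R)
    (D : Fin n → MvPolynomial (Fin n ⊕ Fin n) R) : Prop :=
  ∀ k, mdeg (D k) + 1 ≤ mdeg F

/-- `δ_f = ∑ᵢ (deg fᵢ - 1)`. -/
def deltaF (f : Fin n → MvPolynomial (Fin n) R) : ℤ :=
  ∑ i, (((f i).totalDegree : ℤ) - 1)

/-- `(f)^{≤ d}_x`: sums `∑ fᵢ gᵢ` with `deg fᵢ + deg gᵢ ≤ d` for every `i`. -/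
def boundedSpan (f : Fin n → MvPolynomial (Fin n) R) (d : WithBot ℤ) :
    Set (MvPolynomial (Fin n) R) :=
  {F | ∃ g : Fin n → MvPolynomial (Fin n) R,
    F = ∑ i, f i * g i ∧ ∀ i, mdeg (f i) + mdeg (g i) ≤ d}

/-- A linear functional `L` annuls a set `S` if it vanishes on it. -/
def Annuls (L : MvPolynomial (Fin n) R →ₗ[R] R) (S : Set (MvPolynomial (Fin n) R)) : Prop :=
  ∀ F ∈ S, L F = 0

/-- `L(y_*).P` : apply the functional `L` to the `y`-part of `P ∈ R[x,y]`,
i.e. if `P = ∑_α A_α(x) y^α` then `L(y_*).P = ∑_α L(y^α) • A_α(x)`. -/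
def applyY (L : MvPolynomial (Fin n) R →ₗ[R] R) (P : MvPolynomial (Fin n ⊕ Fin n) R) :
    MvPolynomial (Fin n) R :=
  ∑ m ∈ P.support,
    C (L (monomial (Finsupp.sumFinsuppAddEquivProdFinsupp m).2 (1 : R)) * P.coeff m) *
      monomial (Finsupp.sumFinsuppAddEquivProdFinsupp m).1 (1 : R)

/-- `det‖∇f(x,y) ∇F(x,y); f(x) F(x)‖` : the `(n+1) × (n+1)` determinant whose entry `(k,i)`
is `∇ᵏfᵢ(x,y)` for `k, i ≤ n`, entry `(k, n+1)` is `∇ᵏF(x,y)`, entry `(n+1, i)` is `fᵢ(x)`,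
and entry `(n+1, n+1)` is `F(x)`.  Here `Df i` is the tuple `(∇¹fᵢ, …, ∇ⁿfᵢ)`. -/
def ddetX (f : Fin n → MvPolynomial (Fin n) R)
    (Df : Fin n → Fin n → MvPolynomial (Fin n ⊕ Fin n) R)
    (F : MvPolynomial (Fin n) R) (DF : Fin n → MvPolynomial (Fin n ⊕ Fin n) R) :
    MvPolynomial (Fin n ⊕ Fin n) R :=
  Matrix.det (Matrix.of fun k i : Fin (n + 1) =>
    if hk : (k : ℕ) < n then
      if hi : (i : ℕ) < n then Df ⟨i, hi⟩ ⟨k, hk⟩ else DF ⟨k, hk⟩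
    else
      if hi : (i : ℕ) < n then toX (f ⟨i, hi⟩) else toX F)

/-- `det‖∇f(x,y) ∇F(x,y); f(y) F(y)‖` : as `ddetX` but with last row `(f₁(y),…,fₙ(y),F(y))`. -/
def ddetY (f : Fin n → MvPolynomial (Fin n) R)
    (Df : Fin n → Fin n → MvPolynomial (Fin n ⊕ Fin n) R)
    (F : MvPolynomial (Fin n) R) (DF : Fin n → MvPolynomial (Fin n ⊕ Fin n) R) :
    MvPolynomial (Fin n ⊕ Fin n) R :=
  Matrix.det (Matrix.of fun k i : Fin (n + 1) =>
    if hk : (k : ℕ) < n then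
      if hi : (i : ℕ) < n then Df ⟨i, hi⟩ ⟨k, hk⟩ else DF ⟨k, hk⟩
    else
      if hi : (i : ℕ) < n then toY (f ⟨i, hi⟩) else toY F)

/-- degree of a monomial exponent -/
abbrev degm {σ : Type*} (m : σ →₀ ℕ) : ℕ := m.sum fun _ e => e

lemma mdeg_le_iff {σ S : Type*} [CommSemiring S] {F : MvPolynomial σ S} {c : WithBot ℤ} :
    mdeg F ≤ c ↔ ∀ m ∈ F.support, ((degm m : ℤ) : WithBot ℤ) ≤ c := Finset.sup_le_iff

lemma le_mdeg {σ S : Type*} [CommSemiring S] {F : MvPolynomial σ S} {m : σ →₀ ℕ}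
    (h : m ∈ F.support) : ((degm m : ℤ) : WithBot ℤ) ≤ mdeg F :=
  Finset.le_sup (f := fun m => (((m.sum fun _ e => e : ℕ) : ℤ) : WithBot ℤ)) h

lemma degm_add {σ : Type*} (a b : σ →₀ ℕ) : degm (a + b) = degm a + degm b :=
  Finsupp.sum_add_index' (fun _ => rfl) (fun _ _ _ => rfl)

lemma degs_of_monotonous {σ τ S : Type*} [CommSemiring S] {F : MvPolynomial σ S}
    {D : MvPolynomial τ S} {c : ℤ}
    (h : mdeg D + 1 ≤ mdeg F) (hF : mdeg F ≤ (c : WithBot ℤ)) :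
    ∀ m ∈ D.support, (degm m : ℤ) ≤ c - 1 := by
  intro m hm
  have h1 : ((degm m : ℤ) : WithBot ℤ) + 1 ≤ (c : WithBot ℤ) :=
    le_trans (add_le_add_left (le_mdeg hm) 1) (le_trans h hF)
  have : (((degm m : ℤ) + 1 : ℤ) : WithBot ℤ) ≤ (c : WithBot ℤ) := by
    rw [WithBot.coe_add]; exact_mod_cast h1
  have := WithBot.coe_le_coe.mp this
  omega

/-- bundled linear version of `applyY` -/
def applyYL (L : MvPolynomial (Fin n) R →ₗ[R] R) :
    MvPolynomial (Fin n ⊕ Fin n) R →ₗ[R] MvPolynomial (Fin n) R :=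
  (Finsupp.lsum R fun m => LinearMap.toSpanSingleton R (MvPolynomial (Fin n) R)
    (C (L (monomial (Finsupp.sumFinsuppAddEquivProdFinsupp m).2 (1 : R))) *
      monomial (Finsupp.sumFinsuppAddEquivProdFinsupp m).1 (1 : R))) ∘ₗ
    (AddMonoidAlgebra.coeffLinearEquiv (S := R) (M := Fin n ⊕ Fin n →₀ ℕ) R).toLinearMap

lemma applyY_eq (L : MvPolynomial (Fin n) R →ₗ[R] R) (P : MvPolynomial (Fin n ⊕ Fin n) R) :
    applyY L P = applyYL L P := by
  rw [applyY, applyYL, LinearMap.comp_apply]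
  erw [Finsupp.lsum_apply, Finsupp.sum]
  refine Finset.sum_congr rfl fun m hm => ?_
  rw [LinearMap.toSpanSingleton_apply, smul_eq_C_mul, C_mul]
  show _ = C (coeff m P) *
    (C (L (monomial (Finsupp.sumFinsuppAddEquivProdFinsupp m).2 (1 : R))) *
      monomial (Finsupp.sumFinsuppAddEquivProdFinsupp m).1 (1 : R))
  ring

lemma applyY_monomial (L : MvPolynomial (Fin n) R →ₗ[R] R) (w : Fin n ⊕ Fin n →₀ ℕ) (t : R) :
    applyY L (monomial w t) =
      C (L (monomial (Finsupp.sumFinsuppAddEquivProdFinsupp w).2 (1 : R)) * t) *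
        monomial (Finsupp.sumFinsuppAddEquivProdFinsupp w).1 (1 : R) := by
  rw [applyY_eq, applyYL, LinearMap.comp_apply, ← single_eq_monomial]
  erw [Finsupp.lsum_single]
  rw [LinearMap.toSpanSingleton_apply, smul_eq_C_mul, C_mul]
  ring

lemma applyY_sub_apply (L L' : MvPolynomial (Fin n) R →ₗ[R] R)
    (P : MvPolynomial (Fin n ⊕ Fin n) R) :
    applyY L' P - applyY L P = applyY (L' - L) P := by
  rw [applyY, applyY, applyY, ← Finset.sum_sub_distrib]
  refine Finset.sum_congr rfl fun m hm => ?_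
  rw [LinearMap.sub_apply, sub_mul, C_sub, sub_mul]

lemma applyY_eq_zero (L : MvPolynomial (Fin n) R →ₗ[R] R) (P : MvPolynomial (Fin n ⊕ Fin n) R)
    (h : ∀ m ∈ P.support,
      L (monomial (Finsupp.sumFinsuppAddEquivProdFinsupp m).2 (1 : R)) = 0) :
    applyY L P = 0 := by
  rw [applyY]
  refine Finset.sum_eq_zero fun m hm => ?_
  rw [h m hm, zero_mul, map_zero, zero_mul]

lemma eqv_single_inl :
    ∀ (x : Fin n) (e : ℕ), (Finsupp.sumFinsuppAddEquivProdFinsupp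
      (Finsupp.single (Sum.inl x : Fin n ⊕ Fin n) e) : (Fin n →₀ ℕ) × (Fin n →₀ ℕ))
      = (Finsupp.single x e, 0) := by
  intro x e
  refine Prod.ext ?_ ?_
  · ext z
    rw [Finsupp.fst_sumFinsuppAddEquivProdFinsupp]
    simp [Finsupp.single_apply]
  · ext z
    rw [Finsupp.snd_sumFinsuppAddEquivProdFinsupp]
    simp [Finsupp.single_apply]

lemma eqv_mapDomain_inl (a : Fin n →₀ ℕ) :
    (Finsupp.sumFinsuppAddEquivProdFinsupp (a.mapDomain (Sum.inl : Fin n → Fin n ⊕ Fin n)) :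
      (Fin n →₀ ℕ) × (Fin n →₀ ℕ)) = (a, 0) := by
  induction a using Finsupp.induction with
  | zero => simp
  | single_add x e a _ _ ih =>
    rw [Finsupp.mapDomain_add, map_add, ih, Finsupp.mapDomain_single,
      eqv_single_inl]
    simp [Prod.ext_iff]

lemma degm_split (m : Fin n ⊕ Fin n →₀ ℕ) :
    degm ((Finsupp.sumFinsuppAddEquivProdFinsupp m : (Fin n →₀ ℕ) × (Fin n →₀ ℕ)).1) +
      degm ((Finsupp.sumFinsuppAddEquivProdFinsupp m : (Fin n →₀ ℕ) × (Fin n →₀ ℕ)).2)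
        = degm m := by
  induction m using Finsupp.induction with
  | zero => simp [degm]
  | single_add x e a _ _ ih =>
    rw [map_add, Prod.fst_add, Prod.snd_add, degm_add, degm_add, degm_add]
    cases x with
    | inl x =>
      rw [eqv_single_inl]
      simp only [degm, Prod.fst_zero, Prod.snd_zero, Finsupp.sum_zero_index,
        Finsupp.sum_single_index] at ih ⊢
      omega
    | inr x =>
      have : (Finsupp.sumFinsuppAddEquivProdFinsupp
          (Finsupp.single (Sum.inr x : Fin n ⊕ Fin n) e) : (Fin n →₀ ℕ) × (Fin n →₀ ℕ))
          = (0, Finsupp.single x e) := by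
        refine Prod.ext ?_ ?_
        · ext z
          rw [Finsupp.fst_sumFinsuppAddEquivProdFinsupp]
          simp [Finsupp.single_apply]
        · ext z
          rw [Finsupp.snd_sumFinsuppAddEquivProdFinsupp]
          simp [Finsupp.single_apply]
      rw [this]
      simp only [degm, Prod.fst_zero, Prod.snd_zero, Finsupp.sum_zero_index,
        Finsupp.sum_single_index] at ih ⊢
      omega

lemma applyY_toX_mul (L : MvPolynomial (Fin n) R →ₗ[R] R) (A : MvPolynomial (Fin n) R)
    (P : MvPolynomial (Fin n ⊕ Fin n) R) :
    applyY L (toX A * P) = A * applyY L P := by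
  induction A using MvPolynomial.induction_on' with
  | add p q hp hq =>
    rw [map_add, add_mul, applyY_eq, map_add, ← applyY_eq, ← applyY_eq, hp, hq, add_mul]
  | monomial a r =>
    induction P using MvPolynomial.induction_on' with
    | add p q hp hq =>
      rw [mul_add, applyY_eq, applyY_eq (P := p + q), map_add, map_add, ← applyY_eq,
        ← applyY_eq, ← applyY_eq, ← applyY_eq, hp, hq, mul_add]
    | monomial w t =>
      rw [show toX (monomial a r) = monomial (a.mapDomain Sum.inl) r from rename_monomial _ _ _,
        monomial_mul, applyY_monomial, applyY_monomial]
      rw [map_add, eqv_mapDomain_inl]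
      simp only [Prod.fst_add, Prod.snd_add]
      rw [zero_add]
      rw [C_mul_monomial, C_mul_monomial, monomial_mul, mul_one, mul_one, mul_left_comm]

lemma mdeg_sum_le {σ S ι : Type*} [CommSemiring S] {s : Finset ι} {g : ι → MvPolynomial σ S}
    {c : WithBot ℤ} (h : ∀ i ∈ s, mdeg (g i) ≤ c) : mdeg (∑ i ∈ s, g i) ≤ c := by
  classical
  rw [mdeg_le_iff]
  intro m hm
  obtain ⟨i, hi, hmi⟩ := Finset.mem_biUnion.mp (MvPolynomial.support_sum hm)
  exact le_trans (le_mdeg hmi) (h i hi)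

lemma mdeg_monomial_le {σ S : Type*} [CommSemiring S] (u : σ →₀ ℕ) (t : S) :
    mdeg (monomial u t) ≤ ((degm u : ℤ) : WithBot ℤ) := by
  rw [mdeg_le_iff]
  intro m hm
  have := support_monomial_subset hm
  rw [Finset.mem_singleton] at this
  subst this; exact le_rfl

lemma mdeg_le_totalDegree {σ S : Type*} [CommSemiring S] (P : MvPolynomial σ S) :
    mdeg P ≤ ((P.totalDegree : ℤ) : WithBot ℤ) := by
  rw [mdeg_le_iff]
  intro m hm
  exact_mod_cast WithBot.coe_le_coe.mpr (Int.ofNat_le.mpr (le_totalDegree hm))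

lemma mdeg_applyY_le (L : MvPolynomial (Fin n) R →ₗ[R] R) (P : MvPolynomial (Fin n ⊕ Fin n) R)
    {c : ℤ} (h : ∀ m ∈ P.support,
      L (monomial (Finsupp.sumFinsuppAddEquivProdFinsupp m).2 (1 : R)) = 0 ∨
      ((degm (Finsupp.sumFinsuppAddEquivProdFinsupp m).1 : ℤ) ≤ c)) :
    mdeg (applyY L P) ≤ (c : WithBot ℤ) := by
  rw [applyY]
  refine mdeg_sum_le fun m hm => ?_
  rcases h m hm with h0 | hle
  · rw [h0, zero_mul, map_zero, zero_mul]
    exact bot_le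
  · rw [C_mul_monomial]
    exact le_trans (mdeg_monomial_le _ _) (WithBot.coe_le_coe.mpr hle)

lemma degm_prod_le {ι : Type*} {s : Finset ι} {g : ι → MvPolynomial (Fin n ⊕ Fin n) R}
    {b : ι → ℤ} (h : ∀ i ∈ s, ∀ m ∈ (g i).support, (degm m : ℤ) ≤ b i) :
    ∀ m ∈ (∏ i ∈ s, g i).support, (degm m : ℤ) ≤ ∑ i ∈ s, b i := by
  classical
  induction s using Finset.induction_on with
  | empty =>
    intro m hm
    rw [Finset.prod_empty] at hm
    have := support_monomial_subset (s := 0) (a := (1:R)) (by rwa [monomial_zero', C_1])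
    rw [Finset.mem_singleton] at this
    subst this
    simp [degm]
  | @insert a s' ha ih =>
    intro m hm
    rw [Finset.prod_insert ha] at hm
    have := support_mul _ _ hm
    rw [Finset.mem_add] at this
    obtain ⟨u, hu, v, hv, rfl⟩ := this
    rw [Finset.sum_insert ha, degm_add]
    have h1 := h a (Finset.mem_insert_self a s') u hu
    have h2 := ih (fun i hi => h i (Finset.mem_insert_of_mem hi)) v hv
    rw [Nat.cast_add]
    omega

lemma degm_det_le {N : ℕ} (M : Matrix (Fin N) (Fin N) (MvPolynomial (Fin n ⊕ Fin n) R))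
    (b : Fin N → ℤ) (h : ∀ k i, ∀ m ∈ (M k i).support, (degm m : ℤ) ≤ b i) :
    ∀ m ∈ M.det.support, (degm m : ℤ) ≤ ∑ i, b i := by
  classical
  intro m hm
  rw [Matrix.det_apply] at hm
  obtain ⟨σ, _, hmσ⟩ := Finset.mem_biUnion.mp (MvPolynomial.support_sum hm)
  have hmp := MvPolynomial.support_smul hmσ
  exact degm_prod_le (fun i _ m' hm' => h (σ i) i m' hm') m hmp

lemma mdeg_neg {σ S : Type*} [CommRing S] (P : MvPolynomial σ S) : mdeg (-P) = mdeg P := by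
  rw [mdeg, mdeg, support_neg]

/-- Theorem 2.4: `H(x)` is determined up to an addend in `(f)^{≤ d - δ - 1}_x`
independently of the determination of `L` outside `R[x^{≤ δ_f + δ}]`. -/
theorem applyY_ddetX_sub_of_L {R : Type*} [CommRing R] {n : ℕ}
    (f : Fin n → MvPolynomial (Fin n) R) (hf : ∀ i, (1 : WithBot ℤ) ≤ mdeg (f i))
    (δ : ℤ) (hδ : 0 ≤ δ) (L L' : MvPolynomial (Fin n) R →ₗ[R] R)
    (hL : Annuls L (boundedSpan f ((deltaF f + δ : ℤ) : WithBot ℤ)))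
    (hL' : Annuls L' (boundedSpan f ((deltaF f + δ : ℤ) : WithBot ℤ)))
    (hagree : ∀ G : MvPolynomial (Fin n) R,
      mdeg G ≤ ((deltaF f + δ : ℤ) : WithBot ℤ) → L' G = L G)
    (d : ℤ) (F : MvPolynomial (Fin n) R) (hF : mdeg F ≤ (d : WithBot ℤ))
    (Df : Fin n → Fin n → MvPolynomial (Fin n ⊕ Fin n) R)
    (hDf : ∀ i, IsDiffDeriv (f i) (Df i) ∧ IsMonotonous (f i) (Df i))
    (DF : Fin n → MvPolynomial (Fin n ⊕ Fin n) R)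
    (hDF : IsDiffDeriv F DF ∧ IsMonotonous F DF) :
    applyY L' (ddetX f Df F DF) - applyY L (ddetX f Df F DF) ∈
      boundedSpan f ((d - δ - 1 : ℤ) : WithBot ℤ) := by
  classical
  set L'' : MvPolynomial (Fin n) R →ₗ[R] R := L' - L with hL''def
  have hL''0 : ∀ G : MvPolynomial (Fin n) R,
      mdeg G ≤ ((deltaF f + δ : ℤ) : WithBot ℤ) → L'' G = 0 := by
    intro G hG
    rw [hL''def, LinearMap.sub_apply, hagree G hG, sub_self]
  set A : Matrix (Fin (n+1)) (Fin (n+1)) (MvPolynomial (Fin n ⊕ Fin n) R) :=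
    Matrix.of (fun k i : Fin (n + 1) =>
      if hk : (k : ℕ) < n then
        if hi : (i : ℕ) < n then Df ⟨i, hi⟩ ⟨k, hk⟩ else DF ⟨k, hk⟩
      else
        if hi : (i : ℕ) < n then toX (f ⟨i, hi⟩) else toX F) with hAdef
  have hdetX : ddetX f Df F DF = A.det := by rw [ddetX, hAdef]
  set minor : Fin (n+1) → MvPolynomial (Fin n ⊕ Fin n) R :=
    fun j => (A.submatrix Fin.castSucc j.succAbove).det with hminor
  set B : Fin (n+1) → ℤ :=
    fun t => if h : (t : ℕ) < n then ((f ⟨t, h⟩).totalDegree : ℤ) - 1 else d - 1 with hB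
  -- support bounds for entries
  have hDfdeg : ∀ i k, ∀ m ∈ (Df i k).support,
      (degm m : ℤ) ≤ ((f i).totalDegree : ℤ) - 1 := by
    intro i k
    exact degs_of_monotonous ((hDf i).2 k) (mdeg_le_totalDegree (f i))
  have hDFdeg : ∀ k, ∀ m ∈ (DF k).support, (degm m : ℤ) ≤ d - 1 := by
    intro k
    exact degs_of_monotonous (hDF.2 k) hF
  -- support bound for the minors
  have hmindeg : ∀ j : Fin (n+1), ∀ m ∈ (minor j).support,
      (degm m : ℤ) ≤ ∑ i : Fin n, B (j.succAbove i) := by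
    intro j
    refine degm_det_le _ _ ?_
    intro k i m hm
    have hk : ((Fin.castSucc k : Fin (n+1)) : ℕ) < n := by simpa using k.isLt
    rw [Matrix.submatrix_apply, hAdef, Matrix.of_apply, dif_pos hk] at hm
    simp only [hB]
    by_cases hi : ((j.succAbove i : Fin (n+1)) : ℕ) < n
    · rw [dif_pos hi] at hm ⊢
      exact hDfdeg _ _ m hm
    · rw [dif_neg hi] at hm ⊢
      exact hDFdeg _ m hm
  have hBsum : ∑ t : Fin (n+1), B t = deltaF f + d - 1 := by
    rw [Fin.sum_univ_castSucc]
    have h1 : ∀ i : Fin n, B (Fin.castSucc i) = ((f i).totalDegree : ℤ) - 1 := by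
      intro i
      have hi : ((Fin.castSucc i : Fin (n+1)) : ℕ) < n := by simpa using i.isLt
      have hfin : (⟨((Fin.castSucc i : Fin (n+1)) : ℕ), hi⟩ : Fin n) = i := Fin.ext (by simp)
      simp only [hB]
      rw [dif_pos hi, hfin]
    have h2 : B (Fin.last n) = d - 1 := by
      simp only [hB]
      rw [dif_neg (by simp)]
    rw [h2, Finset.sum_congr rfl (fun i _ => h1 i), deltaF]
    ring
  have hBsucc : ∀ j : Fin (n+1), ∑ i : Fin n, B (j.succAbove i) = deltaF f + d - 1 - B j := by
    intro j
    have h := Fin.sum_univ_succAbove B j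
    rw [hBsum] at h
    omega
  have hminbound : ∀ i : Fin n, ∀ m ∈ (minor (Fin.castSucc i)).support,
      (degm m : ℤ) ≤ deltaF f + d - ((f i).totalDegree : ℤ) := by
    intro i m hm
    have h := hmindeg (Fin.castSucc i) m hm
    rw [hBsucc] at h
    have hi : ((Fin.castSucc i : Fin (n+1)) : ℕ) < n := by simpa using i.isLt
    have hfin : (⟨((Fin.castSucc i : Fin (n+1)) : ℕ), hi⟩ : Fin n) = i := Fin.ext (by simp)
    have hBi : B (Fin.castSucc i) = ((f i).totalDegree : ℤ) - 1 := by
      simp only [hB]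
      rw [dif_pos hi, hfin]
    omega
  have hlastbound : ∀ m ∈ (minor (Fin.last n)).support, (degm m : ℤ) ≤ deltaF f := by
    intro m hm
    have h := hmindeg (Fin.last n) m hm
    rw [hBsucc] at h
    have hBl : B (Fin.last n) = d - 1 := by
      simp only [hB]
      rw [dif_neg (by simp)]
    omega
  have happlylast : applyY L'' (minor (Fin.last n)) = 0 := by
    refine applyY_eq_zero _ _ fun m hm => ?_
    refine hL''0 _ (le_trans (mdeg_monomial_le _ _) (WithBot.coe_le_coe.mpr ?_))
    have h1 := hlastbound m hm
    have h2 := degm_split m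
    omega
  set g : Fin n → MvPolynomial (Fin n) R :=
    fun i => (-1 : MvPolynomial (Fin n) R)^(n + (i:ℕ)) * applyY L'' (minor (Fin.castSucc i))
    with hg
  have heq : applyY L' (ddetX f Df F DF) - applyY L (ddetX f Df F DF) = ∑ i, f i * g i := by
    rw [applyY_sub_apply, ← hL''def, hdetX, Matrix.det_succ_row A (Fin.last n),
      applyY_eq, map_sum, Fin.sum_univ_castSucc]
    have hlastterm : applyYL L''
        ((-1)^(((Fin.last n) : ℕ) + ((Fin.last n) : ℕ)) * A (Fin.last n) (Fin.last n) *
          (A.submatrix (Fin.last n).succAbove (Fin.last n).succAbove).det) = 0 := by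
      rw [← applyY_eq]
      have hAl : A (Fin.last n) (Fin.last n) = toX F := by
        simp only [hAdef, Matrix.of_apply]
        rw [dif_neg (by simp), dif_neg (by simp)]
      have hmeq : (A.submatrix (Fin.last n).succAbove (Fin.last n).succAbove).det
          = minor (Fin.last n) := by
        simp only [hminor]
        rw [Fin.succAbove_last]
      have hpow : ((-1 : MvPolynomial (Fin n ⊕ Fin n) R) ^
          (((Fin.last n) : ℕ) + ((Fin.last n) : ℕ)) * toX F)
          = toX ((-1)^(((Fin.last n) : ℕ) + ((Fin.last n) : ℕ)) * F) := by
        rw [map_mul, map_pow, map_neg, map_one]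
      rw [hAl, hmeq, hpow, applyY_toX_mul, happlylast, mul_zero]
    rw [hlastterm, add_zero]
    refine Finset.sum_congr rfl fun i _ => ?_
    rw [← applyY_eq]
    have hi : ((Fin.castSucc i : Fin (n+1)) : ℕ) < n := by simpa using i.isLt
    have hfin : (⟨((Fin.castSucc i : Fin (n+1)) : ℕ), hi⟩ : Fin n) = i := Fin.ext (by simp)
    have hAi : A (Fin.last n) (Fin.castSucc i) = toX (f i) := by
      simp only [hAdef, Matrix.of_apply]
      rw [dif_neg (by simp), dif_pos hi, hfin]
    have hmeq : (A.submatrix (Fin.last n).succAbove (Fin.castSucc i).succAbove).det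
        = minor (Fin.castSucc i) := by
      simp only [hminor]
      rw [Fin.succAbove_last]
    have hpow : ((-1 : MvPolynomial (Fin n ⊕ Fin n) R) ^
        (((Fin.last n) : ℕ) + ((Fin.castSucc i : Fin (n+1)) : ℕ)) * toX (f i))
        = toX ((-1)^(n + (i : ℕ)) * f i) := by
      rw [map_mul, map_pow, map_neg, map_one, Fin.val_last, Fin.coe_castSucc]
    rw [hAi, hmeq, hpow, applyY_toX_mul]
    simp only [hg]
    ring
  have hdeg : ∀ i, mdeg (f i) + mdeg (g i) ≤ ((d - δ - 1 : ℤ) : WithBot ℤ) := by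
    intro i
    have hgd : mdeg (applyY L'' (minor (Fin.castSucc i)))
        ≤ ((d - δ - 1 - ((f i).totalDegree : ℤ) : ℤ) : WithBot ℤ) := by
      refine mdeg_applyY_le _ _ fun m hm => ?_
      by_cases hc :
        (degm ((Finsupp.sumFinsuppAddEquivProdFinsupp m).2) : ℤ) ≤ deltaF f + δ
      · left
        exact hL''0 _ (le_trans (mdeg_monomial_le _ _) (WithBot.coe_le_coe.mpr hc))
      · right
        have h1 := hminbound i m hm
        have h2 := degm_split m
        omega
    have hgd2 : mdeg (g i) ≤ ((d - δ - 1 - ((f i).totalDegree : ℤ) : ℤ) : WithBot ℤ) := by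
      simp only [hg]
      rcases neg_one_pow_eq_or (MvPolynomial (Fin n) R) (n + (i:ℕ)) with h | h
      · rw [h, one_mul]; exact hgd
      · rw [h, neg_one_mul, mdeg_neg]; exact hgd
    calc mdeg (f i) + mdeg (g i)
        ≤ ((((f i).totalDegree : ℤ)) : WithBot ℤ)
          + ((d - δ - 1 - ((f i).totalDegree : ℤ) : ℤ) : WithBot ℤ) :=
          add_le_add (mdeg_le_totalDegree _) hgd2
      _ = ((d - δ - 1 : ℤ) : WithBot ℤ) := by
          rw [← WithBot.coe_add]
          congr 1
          ring
  exact ⟨g, heq, hdeg⟩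


end
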